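/- Let Q be an r×m integer matrix, with r = m − n, whose rows form a ℤ-basis of the lattice ker(V) ∩ ℤ^m (a Gale dual of V). Then W = Q^{-1}(⟨Q⟩); that is, a vector w ∈ ℝ^m lies in W if and only if Q w belongs to the convex cone in ℝ^r generated by the columns of Q. -/

import Mathlib

open Matrix

/-- The cone `U = ker_ℝ(V) ∩ ℝᵐ_{≥0}`. -/
def coneU {n m : ℕ} (V : Matrix (Fin n) (Fin m) ℤ) : Set (Fin m → ℝ) :=
  {u | (V.map (Int.cast : ℤ → ℝ)) *ᵥ u = 0 ∧ ∀ i, 0 ≤ u i}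

/-- The Gröbner region `W`: weight vectors whose linear functional is bounded below on `U`. -/
def coneW {n m : ℕ} (V : Matrix (Fin n) (Fin m) ℤ) : Set (Fin m → ℝ) :=
  {w | ∃ c : ℝ, ∀ u ∈ coneU V, c ≤ w ⬝ᵥ u}

open scoped RealInnerProductSpace

private lemma vecMul_eq_sum_smul {k l : ℕ} (a : Fin k → ℝ) (M : Matrix (Fin k) (Fin l) ℝ) :
    a ᵥ* M = ∑ i, a i • M i := by
  ext j
  simp [Matrix.vecMul, dotProduct, Finset.sum_apply]

private lemma mulVec_eq_sum_smul {k l : ℕ} (M : Matrix (Fin k) (Fin l) ℝ) (c : Fin l → ℝ) :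
    M *ᵥ c = ∑ j, c j • (fun i => M i j) := by
  ext i
  simp [Matrix.mulVec, dotProduct, Finset.sum_apply, mul_comm]

private lemma cone_caratheodory {ι : Type*} [Fintype ι] [DecidableEq ι] {E : Type*}
    [AddCommGroup E] [Module ℝ E] (v : ι → E) :
    ∀ (k : ℕ) (s : Finset ι) (c : ι → ℝ), s.card ≤ k → (∀ i, 0 ≤ c i) → (∀ i ∉ s, c i = 0) →
      ∃ (t : Finset ι) (c' : ι → ℝ), (∀ i, 0 ≤ c' i) ∧ (∀ i ∉ t, c' i = 0) ∧
        (∑ i, c' i • v i = ∑ i, c i • v i) ∧ LinearIndependent ℝ (fun i : t => v (i : ι)) := by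
  intro k
  induction k with
  | zero =>
    intro s c hcard hc hsupp
    have hs : s = ∅ := Finset.card_eq_zero.mp (Nat.le_zero.mp hcard)
    subst hs
    haveI : IsEmpty {x // x ∈ (∅ : Finset ι)} := ⟨fun x => Finset.notMem_empty _ x.2⟩
    exact ⟨∅, c, hc, hsupp, rfl, linearIndependent_empty_type⟩
  | succ k ih =>
    intro s c hcard hc hsupp
    by_cases hind : LinearIndependent ℝ (fun i : s => v (i : ι))
    · exact ⟨s, c, hc, hsupp, rfl, hind⟩
    · have hsum_univ_s : ∀ (d : ι → ℝ), (∀ i ∉ s, d i = 0) →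
          ∑ i, d i • v i = ∑ i ∈ s, d i • v i := by
        intro d hd
        exact (Finset.sum_subset (Finset.subset_univ s)
          (fun i _ hi => by rw [hd i hi, zero_smul])).symm
      have key : ∀ g : ι → ℝ, (∀ i ∉ s, g i = 0) → (∑ i ∈ s, g i • v i = 0) →
          (∃ i ∈ s, 0 < g i) → ∃ (t : Finset ι) (c' : ι → ℝ), (∀ i, 0 ≤ c' i) ∧
            (∀ i ∉ t, c' i = 0) ∧ (∑ i, c' i • v i = ∑ i, c i • v i) ∧
            LinearIndependent ℝ (fun i : t => v (i : ι)) := by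
        rintro g hgsupp hgsum ⟨jw, hjws, hjw⟩
        have hTne : (s.filter (fun i => 0 < g i)).Nonempty :=
          ⟨jw, Finset.mem_filter.mpr ⟨hjws, hjw⟩⟩
        obtain ⟨i₀, hi₀T, hmin⟩ :=
          (s.filter (fun i => 0 < g i)).exists_min_image (fun i => c i / g i) hTne
        have hi₀s : i₀ ∈ s := (Finset.mem_filter.mp hi₀T).1
        have hgi₀ : 0 < g i₀ := (Finset.mem_filter.mp hi₀T).2
        set t0 : ℝ := c i₀ / g i₀ with ht0def
        have ht0 : 0 ≤ t0 := div_nonneg (hc i₀) hgi₀.le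
        set c'' : ι → ℝ := fun i => if i ∈ s.erase i₀ then c i - t0 * g i else 0 with hc''
        have hc''0 : ∀ i, 0 ≤ c'' i := by
          intro i
          by_cases hi : i ∈ s.erase i₀
          · simp only [hc'', if_pos hi]
            rcases le_or_gt (g i) 0 with hgi | hgi
            · nlinarith [hc i]
            · have hiT : i ∈ s.filter (fun i => 0 < g i) :=
                Finset.mem_filter.mpr ⟨Finset.mem_of_mem_erase hi, hgi⟩
              have h4 := (le_div_iff₀ hgi).mp (hmin i hiT)
              linarith
          · simp only [hc'', if_neg hi]; exact le_rfl
        have hc''supp : ∀ i ∉ s.erase i₀, c'' i = 0 := fun i hi => by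
          simp only [hc'', if_neg hi]
        have herase : ∑ i ∈ s.erase i₀, g i • v i = -(g i₀ • v i₀) := by
          have h := Finset.add_sum_erase s (fun i => g i • v i) hi₀s
          rw [hgsum] at h
          exact eq_neg_of_add_eq_zero_right h
        have hmain_s : ∑ i ∈ s, c'' i • v i = ∑ i ∈ s, c i • v i := by
          rw [← Finset.add_sum_erase s (fun i => c'' i • v i) hi₀s,
              ← Finset.add_sum_erase s (fun i => c i • v i) hi₀s]
          have h0 : c'' i₀ = 0 := by
            simp only [hc'', if_neg (Finset.notMem_erase i₀ s)]
          have h3 : ∑ i ∈ s.erase i₀, c'' i • v i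
              = ∑ i ∈ s.erase i₀, c i • v i - t0 • ∑ i ∈ s.erase i₀, g i • v i := by
            rw [Finset.smul_sum, ← Finset.sum_sub_distrib]
            refine Finset.sum_congr rfl fun i hi => ?_
            simp only [hc'', if_pos hi, sub_smul, smul_smul]
          rw [h0, zero_smul, zero_add, h3, herase, smul_neg, sub_neg_eq_add, smul_smul,
              ht0def, div_mul_cancel₀ _ (ne_of_gt hgi₀)]
          exact add_comm _ _
        have hcard' : (s.erase i₀).card ≤ k := by
          have := Finset.card_erase_of_mem hi₀s
          omega
        obtain ⟨t, c', h1, h2, h3, h4⟩ := ih (s.erase i₀) c'' hcard' hc''0 hc''supp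
        refine ⟨t, c', h1, h2, ?_, h4⟩
        rw [h3, hsum_univ_s c''
          (fun i hi => hc''supp i (fun hmem => hi (Finset.mem_of_mem_erase hmem))),
          hmain_s, ← hsum_univ_s c hsupp]
      obtain ⟨g₀, hg₀, j₀, hj₀⟩ := Fintype.not_linearIndependent_iff.mp hind
      set g : ι → ℝ := fun i => if h : i ∈ s then g₀ ⟨i, h⟩ else 0 with hg
      have hgsupp : ∀ i ∉ s, g i = 0 := fun i hi => dif_neg hi
      have hgs : ∀ i : {x // x ∈ s}, g (i : ι) = g₀ i := fun i => dif_pos i.2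
      have hgsum : ∑ i ∈ s, g i • v i = 0 := by
        rw [← Finset.sum_coe_sort s (fun i => g i • v i), ← hg₀]
        exact Finset.sum_congr rfl fun i _ => by rw [hgs i]
      have hgj₀ : g (j₀ : ι) ≠ 0 := by rw [hgs j₀]; exact hj₀
      rcases lt_or_gt_of_ne hgj₀ with hneg | hpos
      · refine key (-g) (fun i hi => by simp [hgsupp i hi]) ?_ ⟨j₀, j₀.2, by simpa using hneg⟩
        simp only [Pi.neg_apply, neg_smul]
        rw [Finset.sum_neg_distrib, hgsum, neg_zero]
      · exact key g hgsupp hgsum ⟨j₀, j₀.2, hpos⟩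

private lemma isClosed_fg_cone {ι : Type*} [Fintype ι] [DecidableEq ι]
    {E : Type*} [NormedAddCommGroup E] [NormedSpace ℝ E] [FiniteDimensional ℝ E] (v : ι → E) :
    IsClosed {x : E | ∃ c : ι → ℝ, (∀ i, 0 ≤ c i) ∧ ∑ i, c i • v i = x} := by
  classical
  have hset : {x : E | ∃ c : ι → ℝ, (∀ i, 0 ≤ c i) ∧ ∑ i, c i • v i = x}
      = ⋃ (t : Finset ι),
          if LinearIndependent ℝ (fun i : t => v (i : ι)) then
            {x : E | ∃ c : ι → ℝ, (∀ i, 0 ≤ c i) ∧ (∀ i ∉ t, c i = 0) ∧ ∑ i, c i • v i = x}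
          else (∅ : Set E) := by
    ext x
    simp only [Set.mem_iUnion, Set.mem_setOf_eq]
    constructor
    · rintro ⟨c, hc, rfl⟩
      obtain ⟨t, c', h1, h2, h3, h4⟩ :=
        cone_caratheodory v Finset.univ.card Finset.univ c le_rfl hc (by simp)
      refine ⟨t, ?_⟩
      rw [if_pos h4]
      exact ⟨c', h1, h2, h3⟩
    · rintro ⟨t, hx⟩
      by_cases h : LinearIndependent ℝ (fun i : t => v (i : ι))
      · rw [if_pos h] at hx
        obtain ⟨c, h1, _, h3⟩ := hx
        exact ⟨c, h1, h3⟩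
      · rw [if_neg h] at hx; exact absurd hx (Set.notMem_empty x)
  rw [hset]
  refine isClosed_iUnion_of_finite fun t => ?_
  split_ifs with h
  · set L := (Fintype.linearCombination ℝ (fun i : t => v (i : ι)) :
      ({x // x ∈ t} → ℝ) →ₗ[ℝ] E) with hL
    have hker : LinearMap.ker L = ⊥ := by
      rw [LinearMap.ker_eq_bot']
      intro g hg
      rw [hL, Fintype.linearCombination_apply] at hg
      funext i
      exact Fintype.linearIndependent_iff.mp h g hg i
    have hemb := LinearMap.isClosedEmbedding_of_injective hker
    have horth : IsClosed {g : {x // x ∈ t} → ℝ | ∀ i, 0 ≤ g i} := by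
      have he : {g : {x // x ∈ t} → ℝ | ∀ i, 0 ≤ g i} = ⋂ i, {g | 0 ≤ g i} := by
        ext g; simp [Set.mem_iInter]
      rw [he]
      exact isClosed_iInter fun i => isClosed_le continuous_const (continuous_apply i)
    have himg : {x : E | ∃ c : ι → ℝ, (∀ i, 0 ≤ c i) ∧ (∀ i ∉ t, c i = 0) ∧ ∑ i, c i • v i = x}
        = L '' {g : {x // x ∈ t} → ℝ | ∀ i, 0 ≤ g i} := by
      ext x
      constructor
      · rintro ⟨c, h1, h2, rfl⟩
        refine ⟨fun i => c (i : ι), fun i => h1 (i : ι), ?_⟩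
        rw [hL, Fintype.linearCombination_apply]
        rw [Finset.sum_coe_sort t (fun i => c i • v i)]
        exact Finset.sum_subset (Finset.subset_univ t)
          (fun i _ hi => by rw [h2 i hi, zero_smul])
      · rintro ⟨g, hg, rfl⟩
        refine ⟨fun i => if h : i ∈ t then g ⟨i, h⟩ else 0, fun i => ?_, fun i hi => dif_neg hi, ?_⟩
        · by_cases hit : i ∈ t
          · simp only [dif_pos hit]; exact hg _
          · simp only [dif_neg hit]; exact le_rfl
        · rw [hL, Fintype.linearCombination_apply]
          rw [← Finset.sum_subset (Finset.subset_univ t)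
            (fun i _ hi => by simp only [dif_neg hi, zero_smul]),
            ← Finset.sum_coe_sort t (fun i => (if h : i ∈ t then g ⟨i, h⟩ else 0) • v i)]
          exact (Finset.sum_congr rfl fun i _ => by simp only [dif_pos i.2]).symm
    rw [himg]
    exact hemb.isClosedMap _ horth
  · exact isClosed_empty

/-- If `Q` is a Gale dual of `V` (its rows form a `ℤ`-basis of
`ker V ∩ ℤᵐ`), then `W = Q⁻¹(⟨Q⟩)`: a vector `w ∈ ℝᵐ` lies in `W` iff `Q w` belongs
to the convex cone in `ℝʳ` generated by the columns of `Q`. -/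
theorem coneW_eq_preimage_of_coneQ
    (n m r : ℕ) (hnm : n < m) (hr : r = m - n)
    (V : Matrix (Fin n) (Fin m) ℤ) (Q : Matrix (Fin r) (Fin m) ℤ)
    (hrank : V.rank = n)
    (hcomplete : ∀ b : Fin n → ℝ, ∃ u : Fin m → ℝ,
      (∀ i, 0 ≤ u i) ∧ (V.map (Int.cast : ℤ → ℝ)) *ᵥ u = b)
    (hQindep : Function.Injective fun a : Fin r → ℤ => Matrix.vecMul a Q)
    (hQspan : ∀ u : Fin m → ℤ, V *ᵥ u = 0 ↔ ∃ a : Fin r → ℤ, Matrix.vecMul a Q = u) :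
    ∀ w : Fin m → ℝ, w ∈ coneW V ↔
      ∃ c : Fin m → ℝ, (∀ j, 0 ≤ c j) ∧
        (Q.map (Int.cast : ℤ → ℝ)) *ᵥ c = (Q.map (Int.cast : ℤ → ℝ)) *ᵥ w := by
  classical
  intro w
  set Vr := V.map (Int.cast : ℤ → ℝ) with hVrdef
  set Qr := Q.map (Int.cast : ℤ → ℝ) with hQrdef
  -- rows of Q lie in the integer kernel of V
  have hrowZ : ∀ i : Fin r, V *ᵥ (Q i) = 0 := fun i =>
    (hQspan (Q i)).mpr ⟨Pi.single i 1, Matrix.single_one_vecMul i Q⟩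
  have hrowR : ∀ i : Fin r, Vr *ᵥ (Qr i) = 0 := by
    intro i
    ext k
    have h := (RingHom.map_mulVec (Int.castRingHom ℝ) V (Q i) k).symm
    simp only [hrowZ i, Pi.zero_apply, map_zero] at h
    rw [Pi.zero_apply, ← h]
    congr 1
  -- V * Qᵀ = 0 over ℝ
  have hVQ : Vr * Qrᵀ = 0 := by
    ext k i
    have := congrFun (hrowR i) k
    simpa [Matrix.mul_apply, Matrix.mulVec, dotProduct] using this
  -- the Gram determinant is nonzero
  have hdet : (Q * Qᵀ).det ≠ 0 := by
    intro h0
    obtain ⟨b, hb, hb0⟩ := (Matrix.exists_mulVec_eq_zero_iff).mpr h0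
    have h1 : b ᵥ* (Q * Qᵀ) = 0 := by
      rw [← Matrix.mulVec_transpose, Matrix.transpose_mul, Matrix.transpose_transpose, hb0]
    have h2 : (b ᵥ* Q) ⬝ᵥ (b ᵥ* Q) = 0 := by
      calc (b ᵥ* Q) ⬝ᵥ (b ᵥ* Q) = (b ᵥ* Q) ⬝ᵥ (Qᵀ *ᵥ b) := by rw [Matrix.mulVec_transpose]
        _ = ((b ᵥ* Q) ᵥ* Qᵀ) ⬝ᵥ b := Matrix.dotProduct_mulVec _ _ _
        _ = (b ᵥ* (Q * Qᵀ)) ⬝ᵥ b := by rw [Matrix.vecMul_vecMul]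
        _ = 0 := by rw [h1, zero_dotProduct]
    have hbQ : b ᵥ* Q = 0 := dotProduct_self_eq_zero.mp h2
    exact hb (hQindep (show b ᵥ* Q = (0 : Fin r → ℤ) ᵥ* Q by
      rw [hbQ, Matrix.zero_vecMul]))
  -- the rows of Q are linearly independent over ℝ
  have hindR : LinearIndependent ℝ (fun i : Fin r => Qr i) := by
    rw [Fintype.linearIndependent_iff]
    intro g hg
    have hg' : g ᵥ* Qr = 0 := by rw [vecMul_eq_sum_smul]; exact hg
    have h1 : g ᵥ* (Qr * Qrᵀ) = 0 := by rw [← Matrix.vecMul_vecMul, hg', Matrix.zero_vecMul]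
    have h2 : Qr * Qrᵀ = (Q * Qᵀ).map (Int.cast : ℤ → ℝ) := by
      rw [hQrdef, ← Matrix.transpose_map]
      exact (Matrix.map_mul (f := Int.castRingHom ℝ)).symm
    have hdetR : (Qr * Qrᵀ).det ≠ 0 := by
      rw [h2]
      have := RingHom.map_det (Int.castRingHom ℝ) (Q * Qᵀ)
      rw [RingHom.mapMatrix_apply, Int.coe_castRingHom] at this
      rw [← this]
      exact Int.cast_ne_zero.mpr hdet
    have h3 := Matrix.eq_zero_of_vecMul_eq_zero hdetR h1
    exact fun i => congrFun h3 i
  -- V_ℝ is surjective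
  have hsurj : Function.Surjective (Matrix.mulVecLin Vr) := fun b =>
    (hcomplete b).imp (fun u hu => hu.2)
  have hkerdim : Module.finrank ℝ (LinearMap.ker (Matrix.mulVecLin Vr)) = r := by
    have h1 := LinearMap.finrank_range_add_finrank_ker (Matrix.mulVecLin Vr)
    rw [LinearMap.range_eq_top.mpr hsurj, finrank_top] at h1
    rw [Module.finrank_pi, Module.finrank_pi] at h1
    simp only [Fintype.card_fin] at h1
    omega
  -- the kernel of V_ℝ is spanned by the rows of Q
  have hspan : LinearMap.ker (Matrix.mulVecLin Vr)
      = Submodule.span ℝ (Set.range fun i : Fin r => Qr i) := by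
    have hle : Submodule.span ℝ (Set.range fun i : Fin r => Qr i)
        ≤ LinearMap.ker (Matrix.mulVecLin Vr) := by
      rw [Submodule.span_le]
      rintro x ⟨i, rfl⟩
      exact LinearMap.mem_ker.mpr (by rw [Matrix.mulVecLin_apply]; exact hrowR i)
    refine (Submodule.eq_of_le_of_finrank_le hle ?_).symm
    rw [hkerdim, finrank_span_eq_card hindR, Fintype.card_fin]
  constructor
  · rintro ⟨cb, hcb⟩
    -- the functional is nonnegative on U
    have hpos : ∀ u ∈ coneU V, 0 ≤ w ⬝ᵥ u := by
      intro u hu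
      by_contra hneg
      push_neg at hneg
      have hscale : ∀ t : ℝ, 0 ≤ t → t • u ∈ coneU V := by
        intro t ht
        refine ⟨?_, fun i => mul_nonneg ht (hu.2 i)⟩
        rw [Matrix.mulVec_smul, hu.1, smul_zero]
      have ht0 : (0:ℝ) ≤ max 0 (cb / (w ⬝ᵥ u)) + 1 := by
        have := le_max_left 0 (cb / (w ⬝ᵥ u)); linarith
      set t : ℝ := max 0 (cb / (w ⬝ᵥ u)) + 1 with htdef
      have h1 := hcb (t • u) (hscale t ht0)
      have hd : w ⬝ᵥ (t • u) = t * (w ⬝ᵥ u) := by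
        simp [dotProduct, Finset.mul_sum, mul_assoc, mul_left_comm]
      rw [hd] at h1
      have h3 : cb / (w ⬝ᵥ u) < t := by
        have := le_max_right 0 (cb / (w ⬝ᵥ u)); linarith
      have h2 : t * (w ⬝ᵥ u) < cb := by
        calc t * (w ⬝ᵥ u) < (cb / (w ⬝ᵥ u)) * (w ⬝ᵥ u) :=
              mul_lt_mul_of_neg_right h3 hneg
          _ = cb := div_mul_cancel₀ _ (ne_of_lt hneg)
      linarith
    by_contra hnot
    -- separation argument in Euclidean space
    set φ := EuclideanSpace.equiv (Fin r) ℝ with hφdef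
    set C0 : Set (Fin r → ℝ) := {x | ∃ c : Fin m → ℝ, (∀ j, 0 ≤ c j) ∧ Qr *ᵥ c = x} with hC0def
    have hC0closed : IsClosed C0 := by
      have he : C0 = {x : Fin r → ℝ | ∃ c : Fin m → ℝ,
          (∀ j, 0 ≤ c j) ∧ ∑ j, c j • (fun i => Qr i j) = x} := by
        ext x
        constructor
        · rintro ⟨c, h1, h2⟩
          exact ⟨c, h1, by rw [← mulVec_eq_sum_smul]; exact h2⟩
        · rintro ⟨c, h1, h2⟩
          exact ⟨c, h1, by rw [mulVec_eq_sum_smul]; exact h2⟩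
      rw [he]
      exact isClosed_fg_cone _
    let K : ConvexCone ℝ (EuclideanSpace ℝ (Fin r)) :=
      { carrier := φ ⁻¹' C0
        smul_mem' := by
          rintro t ht x ⟨c, hc, hcx⟩
          refine ⟨t • c, fun j => mul_nonneg ht.le (hc j), ?_⟩
          rw [Matrix.mulVec_smul, hcx, _root_.map_smul]
        add_mem' := by
          rintro x ⟨c, hc, hcx⟩ y ⟨d, hd, hdy⟩
          refine ⟨c + d, fun j => add_nonneg (hc j) (hd j), ?_⟩
          rw [Matrix.mulVec_add, hcx, hdy, _root_.map_add] }
    have hKmem : ∀ x : EuclideanSpace ℝ (Fin r), x ∈ K ↔ φ x ∈ C0 := fun x => Iff.rfl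
    have hKne : ((K : Set (EuclideanSpace ℝ (Fin r)))).Nonempty := by
      refine ⟨0, ⟨0, fun j => le_rfl, ?_⟩⟩
      rw [Matrix.mulVec_zero, _root_.map_zero]
    have hKclosed : IsClosed (K : Set (EuclideanSpace ℝ (Fin r))) :=
      hC0closed.preimage φ.continuous
    have hbK : φ.symm (Qr *ᵥ w) ∉ K := by
      intro hmem
      rw [hKmem, φ.apply_symm_apply] at hmem
      exact hnot hmem
    obtain ⟨y, hy1, hy2⟩ : ∃ y, (∀ x ∈ K, 0 ≤ inner ℝ x y) ∧ inner ℝ y (φ.symm (Qr *ᵥ w)) < 0 := by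
      let P : ProperCone ℝ (EuclideanSpace ℝ (Fin r)) :=
        { carrier := K
          add_mem' := fun ha hb => K.add_mem ha hb
          zero_mem' := ⟨0, fun j => le_rfl, by rw [Matrix.mulVec_zero, _root_.map_zero]⟩
          smul_mem' := fun c x hx => by
            obtain ⟨d, hd, hdx⟩ := (hKmem x).mp hx
            refine (hKmem _).mpr ⟨(c : ℝ) • d, fun j => mul_nonneg c.2 (hd j), ?_⟩
            rw [Matrix.mulVec_smul, hdx]; exact (φ.map_smul (c:ℝ) x).symm
          isClosed' := hKclosed }
      obtain ⟨y, h1, h2⟩ := P.hyperplane_separation' hbK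
      exact ⟨y, h1, by rw [real_inner_comm]; exact h2⟩
    -- translate the separating functional back
    have hinner : ∀ x z : EuclideanSpace ℝ (Fin r), (inner ℝ x z : ℝ) = φ x ⬝ᵥ φ z := by
      intro x z
      simp [PiLp.inner_apply, RCLike.inner_apply, dotProduct]
      exact Finset.sum_congr rfl fun i _ => mul_comm _ _
    set a : Fin r → ℝ := φ y with hadef
    set u : Fin m → ℝ := a ᵥ* Qr with hudef
    have hu0 : ∀ j, 0 ≤ u j := by
      intro j
      have hmem : φ.symm (Qr *ᵥ Pi.single j 1) ∈ K := by
        rw [hKmem, φ.apply_symm_apply]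
        exact ⟨Pi.single j 1, fun j' => by
          rcases eq_or_ne j' j with rfl | hne
          · simp
          · simp [Pi.single_apply, hne], rfl⟩
      have := hy1 _ hmem
      rw [hinner, φ.apply_symm_apply] at this
      have he : (Qr *ᵥ Pi.single j 1) ⬝ᵥ φ y = u j := by
        simp [hudef, hadef, Matrix.mulVec, Matrix.vecMul, dotProduct, Pi.single_apply, mul_comm]
      rwa [he] at this
    have huU : u ∈ coneU V := by
      refine ⟨?_, hu0⟩
      rw [hudef, Matrix.mulVec_vecMul, hVQ, Matrix.zero_mulVec]
    have hfin : w ⬝ᵥ u = a ⬝ᵥ (Qr *ᵥ w) := by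
      rw [Matrix.dotProduct_mulVec, dotProduct_comm, hudef]
    have hlt : a ⬝ᵥ (Qr *ᵥ w) < 0 := by
      have := hy2
      rw [hinner, φ.apply_symm_apply] at this
      exact this
    have := hpos u huU
    rw [hfin] at this
    linarith
  · rintro ⟨c, hc0, hceq⟩
    refine ⟨0, fun u hu => ?_⟩
    have humem : u ∈ Submodule.span ℝ (Set.range fun i : Fin r => Qr i) := by
      rw [← hspan]
      exact LinearMap.mem_ker.mpr (by rw [Matrix.mulVecLin_apply]; exact hu.1)
    obtain ⟨a, ha⟩ := (Submodule.mem_span_range_iff_exists_fun ℝ).mp humem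
    have hu' : u = a ᵥ* Qr := by rw [vecMul_eq_sum_smul]; exact ha.symm
    have hwu : w ⬝ᵥ u = u ⬝ᵥ c := by
      calc w ⬝ᵥ u = u ⬝ᵥ w := dotProduct_comm _ _
        _ = a ⬝ᵥ (Qr *ᵥ w) := by rw [hu', ← Matrix.dotProduct_mulVec]
        _ = a ⬝ᵥ (Qr *ᵥ c) := by rw [hceq]
        _ = u ⬝ᵥ c := by rw [Matrix.dotProduct_mulVec, ← hu']
    rw [hwu]
    exact Finset.sum_nonneg fun i _ => mul_nonneg (hu.2 i) (hc0 i)
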